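/- Suppose the class F satisfies: for every x_{1:T} ∈ X^T and y_{1:T} ∈ Y^T, inf_{f ∈ F} Σ_{t=1}^T ℓ(f(x_{1:t}, y_{1:t-1}), y_t) < ∞. Then the minimax regret equals the dual value: R_T(F) = V_T(F). -/

import Mathlib

open scoped BigOperators

/-- The probability simplex on a finite label set `Y`. -/
abbrev Simplex (Y : Type*) [Fintype Y] :=
  {p : Y → ℝ // (∀ y, 0 ≤ p y) ∧ ∑ y, p y = 1}

/-- A sequential expert: given contexts `x₁,…,x_t` (a list of length `t`) and past labels
`y₁,…,y_{t-1}` (a list of length `t-1`), it predicts a distribution over labels. -/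
abbrev Expert (X Y : Type*) [Fintype Y] := List X → List Y → Simplex Y

/-- `-log x` as an extended real, with `-log 0 = ⊤` (and junk value `⊤` for `x < 0`). -/
noncomputable def negLog (x : ℝ) : EReal :=
  if x ≤ 0 then ⊤ else ((-Real.log x : ℝ) : EReal)

/-- `log x` as an extended real, with `log 0 = ⊥` (and junk value `⊥` for `x < 0`). -/
noncomputable def elog (x : ℝ) : EReal :=
  if x ≤ 0 then ⊥ else ((Real.log x : ℝ) : EReal)

/-- The logarithmic loss `ℓ(p, y) = -log p(y) ∈ [0, ∞]`. -/
noncomputable def logloss {Y : Type*} [Fintype Y] (p : Simplex Y) (y : Y) : EReal :=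
  negLog (p.1 y)

/-- Likelihood of expert `f` on a context sequence `xs` and a label sequence `ys`
of the same length: `L(f; y_{1:d} | x_{1:d}) = ∏_{t=1}^d f(x_{1:t}, y_{1:t-1})(y_t)`. -/
noncomputable def likelihood {X Y : Type*} [Fintype Y] [Inhabited Y]
    (f : Expert X Y) (xs : List X) (ys : List Y) : ℝ :=
  ∏ t ∈ Finset.range ys.length, (f (xs.take (t + 1)) (ys.take t)).1 (ys.getD t default)

/-- Cumulative log loss of expert `f` on `xs`, `ys`:
`Σ_{t=1}^d ℓ(f(x_{1:t}, y_{1:t-1}), y_t)`. -/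
noncomputable def cumLoss {X Y : Type*} [Fintype Y] [Inhabited Y]
    (f : Expert X Y) (xs : List X) (ys : List Y) : EReal :=
  ∑ t ∈ Finset.range ys.length, logloss (f (xs.take (t + 1)) (ys.take t)) (ys.getD t default)

/-- A context tree of depth `T` is modelled as a map `χ : List Y → X` (only its values on
lists of length `< T` matter): `x_t(y) = χ (y_{1:t-1})`.  `treePath χ ys` is the context
sequence `x(y) = (x_1, x_2(y_1), …)` obtained by tracing the tree along the path `ys`. -/
def treePath {X Y : Type*} (χ : List Y → X) (ys : List Y) : List X :=
  (List.range ys.length).map fun t => χ (ys.take t)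

/-- The contextual Shtarkov sum of `F` on a context tree `χ` of depth `r`, with prefix
`xs ∈ X^t`, `ys ∈ Y^t`:
`S_T(F, χ | x_{1:t}, y_{1:t}) = Σ_{y ∈ Y^r} sup_{f ∈ F} L(f; (y_{1:t}, y) | (x_{1:t}, χ(y)))`. -/
noncomputable def shtarkovPrefix {X Y : Type*} [Fintype Y] [Inhabited Y]
    (F : Set (Expert X Y)) (r : ℕ) (χ : List Y → X) (xs : List X) (ys : List Y) : ℝ :=
  ∑ y : Fin r → Y, ⨆ f : F,
    likelihood (f : Expert X Y) (xs ++ treePath χ (List.ofFn y)) (ys ++ List.ofFn y)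

/-- The contextual Shtarkov sum `S_T(F | χ) = Σ_{y ∈ Y^T} sup_{f ∈ F} L(f; y | χ(y))`. -/
noncomputable def shtarkov {X Y : Type*} [Fintype Y] [Inhabited Y]
    (F : Set (Expert X Y)) (T : ℕ) (χ : List Y → X) : ℝ :=
  shtarkovPrefix F T χ [] []

/-- The extensive-form game value with `r` rounds to go, given past contexts `xs`, past
labels `ys`, and accumulated learner loss `acc`:
`sup_{x} inf_{p̂} sup_{y} ⋯ [ acc + Σ ℓ(p̂_s, y_s) − inf_{f ∈ F} Σ_{s=1}^T ℓ(f, y_s) ]`. -/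
noncomputable def valToGo {X Y : Type*} [Fintype Y] [Inhabited Y]
    (F : Set (Expert X Y)) : ℕ → List X → List Y → EReal → EReal
  | 0, xs, ys, acc => acc - ⨅ f : F, cumLoss (f : Expert X Y) xs ys
  | r + 1, xs, ys, acc =>
      ⨆ x : X, ⨅ p : Simplex Y, ⨆ y : Y,
        valToGo F r (xs ++ [x]) (ys ++ [y]) (acc + logloss p y)

/-- The minimax regret
`R_T(F) = sup_{x_1} inf_{p̂_1} sup_{y_1} ⋯ sup_{x_T} inf_{p̂_T} sup_{y_T} R_T(F; p̂, x, y)`. -/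
noncomputable def minimaxRegret {X Y : Type*} [Fintype Y] [Inhabited Y]
    (F : Set (Expert X Y)) (T : ℕ) : EReal :=
  valToGo F T [] [] 0

/-- Nested conditional expectation over a probabilistic tree `π`, for `r` remaining rounds:
`E_{y_1 ∼ π([])} E_{y_2 ∼ π(y_{1:1})} ⋯ [g(y_{1:r})]`. -/
noncomputable def expTree {Y : Type*} [Fintype Y] (π : List Y → Simplex Y)
    (g : List Y → EReal) : ℕ → List Y → EReal
  | 0, pre => g pre
  | r + 1, pre => ∑ y : Y, ((π pre).1 y : EReal) * expTree π g r (pre ++ [y])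

/-- The dual (max-min) value-to-go `W(F, x_{1:t}, y_{1:t})`: the supremum over context trees
`χ` and probabilistic trees `π` of depth `r = T - t` of
`E_{y∼π}[ Σ_{s=t+1}^T ℓ(π_s(y), y_s) − inf_{f ∈ F} Σ_{s=1}^T ℓ(f, y_s) ]`. -/
noncomputable def dualValToGo {X Y : Type*} [Fintype Y] [Inhabited Y]
    (F : Set (Expert X Y)) (r : ℕ) (xs : List X) (ys : List Y) : EReal :=
  ⨆ χ : List Y → X, ⨆ π : List Y → Simplex Y,
    expTree π (fun suf =>
      (∑ s ∈ Finset.range r, logloss (π (suf.take s)) (suf.getD s default)) -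
        ⨅ f : F, cumLoss (f : Expert X Y) (xs ++ treePath χ suf) (ys ++ suf)) r []

/-- The dual (max-min) value `V_T(F)`. -/
noncomputable def dualValue {X Y : Type*} [Fintype Y] [Inhabited Y]
    (F : Set (Expert X Y)) (T : ℕ) : EReal :=
  dualValToGo F T [] []

section Aux
open ENNReal

lemma exp_negLog (x : ℝ) : EReal.exp (negLog x) = (ENNReal.ofReal x)⁻¹ := by
  unfold negLog
  split_ifs with h
  · simp [ENNReal.ofReal_eq_zero.mpr h]
  · push_neg at h
    rw [EReal.exp_coe, Real.exp_neg, Real.exp_log h, ← ENNReal.ofReal_inv_of_pos h]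

lemma exp_sum {α : Type*} (s : Finset α) (f : α → EReal) :
    EReal.exp (∑ i ∈ s, f i) = ∏ i ∈ s, EReal.exp (f i) := by
  classical
  induction s using Finset.induction with
  | empty => simp
  | @insert _ _ h ih => rw [Finset.sum_insert h, Finset.prod_insert h, EReal.exp_add, ih]

lemma exp_sub (a b : EReal) : EReal.exp (a - b) = EReal.exp a * (EReal.exp b)⁻¹ := by
  rw [sub_eq_add_neg, EReal.exp_add, EReal.exp_neg]

lemma exp_iSup {ι : Type*} (f : ι → EReal) : EReal.exp (⨆ i, f i) = ⨆ i, EReal.exp (f i) := by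
  have h := EReal.expOrderIso.map_iSup f
  simp only [EReal.expOrderIso_apply] at h
  exact h

lemma exp_iInf {ι : Type*} (f : ι → EReal) : EReal.exp (⨅ i, f i) = ⨅ i, EReal.exp (f i) := by
  have h := EReal.expOrderIso.map_iInf f
  simp only [EReal.expOrderIso_apply] at h
  exact h

instance instNonemptySimplex {Y : Type*} [Fintype Y] [Inhabited Y] : Nonempty (Simplex Y) := by
  classical
  exact ⟨⟨fun y => if y = default then 1 else 0,
    fun y => by dsimp only; split <;> norm_num, by simp⟩⟩

lemma prod_rpow_weight {Y : Type*} [Fintype Y] (A : ℝ≥0∞) (w : Y → ℝ) (hw : ∀ y, 0 ≤ w y)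
    (hs : ∑ y, w y = 1) : ∏ y, A ^ (w y) = A := by
  classical
  have key : ∀ s : Finset Y, ∏ y ∈ s, A ^ (w y) = A ^ (∑ y ∈ s, w y) := by
    intro s
    induction s using Finset.induction with
    | empty => simp
    | @insert a s ha ih =>
        rw [Finset.prod_insert ha, Finset.sum_insert ha, ih,
          ENNReal.rpow_add_of_nonneg _ _ (hw a) (Finset.sum_nonneg fun y _ => hw y)]
  rw [key, hs, ENNReal.rpow_one]

lemma prod_mul_rpow {Y : Type*} [Fintype Y] (A : ℝ≥0∞) (E : Y → ℝ≥0∞) (w : Y → ℝ)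
    (hw : ∀ y, 0 ≤ w y) (hs : ∑ y, w y = 1) :
    ∏ y, (A * E y) ^ (w y) = A * ∏ y, (E y) ^ (w y) := by
  simp_rw [fun y => ENNReal.mul_rpow_of_nonneg A (E y) (hw y)]
  rw [Finset.prod_mul_distrib, prod_rpow_weight A w hw hs]

lemma iSup_rpow {ι : Type*} [Nonempty ι] (f : ι → ℝ≥0∞) {w : ℝ} (hw : 0 ≤ w) :
    (⨆ i, f i) ^ w = ⨆ i, (f i) ^ w := by
  rcases eq_or_lt_of_le hw with rfl | hw
  · simp [ENNReal.rpow_zero]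
  refine le_antisymm ?_ (iSup_le fun i => ENNReal.rpow_le_rpow (le_iSup f i) hw.le)
  have h1 : ∀ i, f i ≤ (⨆ j, (f j) ^ w) ^ (1 / w) := by
    intro i
    have := ENNReal.rpow_le_rpow (le_iSup (fun j => (f j) ^ w) i) (by positivity : (0:ℝ) ≤ 1 / w)
    rwa [← ENNReal.rpow_mul, mul_one_div, div_self hw.ne', ENNReal.rpow_one] at this
  have h2 : (⨆ i, f i) ≤ (⨆ j, (f j) ^ w) ^ (1 / w) := iSup_le h1
  calc (⨆ i, f i) ^ w ≤ ((⨆ j, (f j) ^ w) ^ (1 / w)) ^ w := ENNReal.rpow_le_rpow h2 hw.le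
    _ = ⨆ j, (f j) ^ w := by
        rw [← ENNReal.rpow_mul, one_div_mul_cancel hw.ne', ENNReal.rpow_one]

lemma prod_iSup {Y : Type*} [Fintype Y] {ι : Type*} [Nonempty ι] (f : Y → ι → ℝ≥0∞) :
    ∏ y, ⨆ i, f y i = ⨆ g : Y → ι, ∏ y, f y (g y) := by
  classical
  have key : ∀ s : Finset Y, ∏ y ∈ s, ⨆ i, f y i = ⨆ g : Y → ι, ∏ y ∈ s, f y (g y) := by
    intro s
    induction s using Finset.induction with
    | empty => simp
    | @insert a s ha ih =>
        rw [Finset.prod_insert ha, ih, ENNReal.iSup_mul]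
        simp_rw [ENNReal.mul_iSup]
        refine le_antisymm (iSup_le fun i => iSup_le fun g => ?_) (iSup_le fun g => ?_)
        · refine le_iSup_of_le (Function.update g a i) ?_
          rw [Finset.prod_insert ha, Function.update_self]
          gcongr with y hy
          rw [Function.update_of_ne]
          intro hya; subst hya; exact ha hy
        · rw [Finset.prod_insert ha]
          exact le_iSup_of_le (g a) (le_iSup_of_le g le_rfl)
  exact key Finset.univ

end Aux

section Round
open ENNReal
variable {Y : Type*} [Fintype Y] [Inhabited Y]

lemma gibbs_key {S : ℝ≥0∞} (hS0 : S ≠ 0) (hST : S ≠ ⊤) {cy : ℝ≥0∞} (h0 : cy ≠ 0) (hT : cy ≠ ⊤) :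
    (ENNReal.ofReal (cy.toReal / S.toReal))⁻¹ * cy = S := by
  rw [ENNReal.ofReal_div_of_pos (ENNReal.toReal_pos hS0 hST), ENNReal.ofReal_toReal hT,
    ENNReal.ofReal_toReal hST, ENNReal.inv_div (Or.inl hST) (Or.inl hS0),
    ENNReal.div_mul_cancel h0 hT]

/-- The Gibbs distribution for values `c` with finite positive total mass. -/
noncomputable def gibbs (c : Y → ℝ≥0∞) (hS0 : ∑ y, c y ≠ 0) (hST : ∑ y, c y ≠ ⊤) : Simplex Y :=
  ⟨fun y => (c y).toReal / (∑ y, c y).toReal, fun y => by positivity, by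
    have hfin : ∀ a ∈ Finset.univ, c a ≠ ⊤ := fun a _ h =>
      hST (ENNReal.sum_eq_top.mpr ⟨a, Finset.mem_univ a, h⟩)
    rw [← Finset.sum_div, ← ENNReal.toReal_sum hfin,
      div_self (ENNReal.toReal_ne_zero.mpr ⟨hS0, hST⟩)]⟩

lemma round_min (A : ℝ≥0∞) (c : Y → ℝ≥0∞) :
    ⨅ p : Simplex Y, ⨆ y, A * ((ENNReal.ofReal (p.1 y))⁻¹ * c y) = A * ∑ y, c y := by
  rcases eq_or_ne A 0 with rfl | hA
  · simp
  refine le_antisymm ?_ ?_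
  · -- choose a good p
    rcases eq_or_ne (∑ y, c y) 0 with hS | hS0
    · have hc : ∀ y, c y = 0 := by
        intro y
        exact (Finset.sum_eq_zero_iff.mp hS) y (Finset.mem_univ y)
      refine le_trans (iInf_le _ (Classical.arbitrary (Simplex Y))) ?_
      simp [hc]
    rcases eq_or_ne (∑ y, c y) ⊤ with hST | hST
    · rw [hST, ENNReal.mul_top hA]; exact le_top
    refine le_trans (iInf_le _ (gibbs c hS0 hST)) (iSup_le fun y => ?_)
    rcases eq_or_ne (c y) 0 with hc0 | hc0
    · simp [hc0]
    have hcT : c y ≠ ⊤ := by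
      intro h
      exact hST (by rw [ENNReal.sum_eq_top]; exact ⟨y, Finset.mem_univ y, h⟩)
    rw [show (gibbs c hS0 hST).1 y = (c y).toReal / (∑ y, c y).toReal from rfl,
      gibbs_key hS0 hST hc0 hcT]
  · refine le_iInf fun p => ?_
    rw [← ENNReal.mul_iSup]
    gcongr A * ?_
    by_contra hlt
    push_neg at hlt
    set M := ⨆ y, (ENNReal.ofReal (p.1 y))⁻¹ * c y with hM
    have hbound : ∀ y, c y ≤ ENNReal.ofReal (p.1 y) * M := by
      intro y
      have hy : (ENNReal.ofReal (p.1 y))⁻¹ * c y ≤ M := le_iSup (fun y => (ENNReal.ofReal (p.1 y))⁻¹ * c y) y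
      rcases eq_or_ne (ENNReal.ofReal (p.1 y)) 0 with h0 | h0
      · rcases eq_or_ne (c y) 0 with hc | hc
        · simp [hc]
        · exfalso
          rw [h0, ENNReal.inv_zero, ENNReal.top_mul hc] at hy
          rw [top_le_iff.mp hy] at hlt
          exact not_top_lt hlt
      · calc c y = ENNReal.ofReal (p.1 y) * ((ENNReal.ofReal (p.1 y))⁻¹ * c y) := by
              rw [← mul_assoc, ENNReal.mul_inv_cancel h0 ENNReal.ofReal_ne_top, one_mul]
          _ ≤ ENNReal.ofReal (p.1 y) * M := by gcongr
    have hsum : ∑ y, c y ≤ M := by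
      calc ∑ y, c y ≤ ∑ y, ENNReal.ofReal (p.1 y) * M := Finset.sum_le_sum fun y _ => hbound y
        _ = (∑ y, ENNReal.ofReal (p.1 y)) * M := by rw [Finset.sum_mul]
        _ = M := by
            rw [← ENNReal.ofReal_sum_of_nonneg (fun y _ => p.2.1 y), p.2.2, ENNReal.ofReal_one,
              one_mul]
    exact absurd (lt_of_le_of_lt hsum hlt) (lt_irrefl _)
end Round

section RoundMax
open ENNReal
variable {Y : Type*} [Fintype Y] [Inhabited Y]

lemma round_max (c : Y → ℝ≥0∞) :
    ⨆ q : Simplex Y, ∏ y, ((ENNReal.ofReal (q.1 y))⁻¹ * c y) ^ (q.1 y) = ∑ y, c y := by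
  classical
  refine le_antisymm (iSup_le fun q => ?_) ?_
  · -- AM-GM direction
    by_cases htop : ∃ y, 0 < q.1 y ∧ c y = ⊤
    · rcases htop with ⟨y0, hy0, hc0⟩
      rw [ENNReal.sum_eq_top.mpr ⟨y0, Finset.mem_univ y0, hc0⟩]
      exact le_top
    push_neg at htop
    set s : Finset Y := Finset.univ.filter (fun y => 0 < q.1 y) with hs
    have hfin : ∀ y ∈ s, c y ≠ ⊤ := fun y hy =>
      htop y ((Finset.mem_filter.mp hy).2)
    have hprod : ∏ y, ((ENNReal.ofReal (q.1 y))⁻¹ * c y) ^ (q.1 y)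
        = ∏ y ∈ s, ((ENNReal.ofReal (q.1 y))⁻¹ * c y) ^ (q.1 y) := by
      symm
      refine Finset.prod_subset (Finset.subset_univ s) fun y _ hy => ?_
      have : q.1 y = 0 := by
        by_contra h
        exact hy (Finset.mem_filter.mpr ⟨Finset.mem_univ y, (q.2.1 y).lt_of_ne (Ne.symm h)⟩)
      rw [this, ENNReal.rpow_zero]
    have hsum1 : ∑ y ∈ s, q.1 y = 1 := by
      refine (Finset.sum_subset (Finset.subset_univ s) fun y _ hy => ?_).trans q.2.2
      by_contra h
      exact hy (Finset.mem_filter.mpr ⟨Finset.mem_univ y, (q.2.1 y).lt_of_ne (Ne.symm h)⟩)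
    have hfactor : ∀ y ∈ s, ((ENNReal.ofReal (q.1 y))⁻¹ * c y) ^ (q.1 y)
        = ENNReal.ofReal (((c y).toReal / q.1 y) ^ (q.1 y)) := by
      intro y hy
      have hqy : 0 < q.1 y := (Finset.mem_filter.mp hy).2
      have h1 : (ENNReal.ofReal (q.1 y))⁻¹ * c y = ENNReal.ofReal ((c y).toReal / q.1 y) := by
        rw [ENNReal.ofReal_div_of_pos hqy, ENNReal.ofReal_toReal (hfin y hy), div_eq_mul_inv,
          mul_comm]
      rw [h1, ENNReal.ofReal_rpow_of_nonneg (div_nonneg ENNReal.toReal_nonneg (q.2.1 y)) (q.2.1 y)]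
    calc ∏ y, ((ENNReal.ofReal (q.1 y))⁻¹ * c y) ^ (q.1 y)
        = ∏ y ∈ s, ENNReal.ofReal (((c y).toReal / q.1 y) ^ (q.1 y)) := by
          rw [hprod]; exact Finset.prod_congr rfl hfactor
      _ = ENNReal.ofReal (∏ y ∈ s, ((c y).toReal / q.1 y) ^ (q.1 y)) := by
          rw [ENNReal.ofReal_prod_of_nonneg fun y _ => Real.rpow_nonneg (div_nonneg ENNReal.toReal_nonneg (q.2.1 y)) _]
      _ ≤ ENNReal.ofReal (∑ y ∈ s, q.1 y * ((c y).toReal / q.1 y)) := by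
          refine ENNReal.ofReal_le_ofReal ?_
          exact Real.geom_mean_le_arith_mean_weighted s _ _ (fun y _ => q.2.1 y) hsum1
            (fun y _ => div_nonneg ENNReal.toReal_nonneg (q.2.1 y))
      _ = ENNReal.ofReal (∑ y ∈ s, (c y).toReal) := by
          congr 1
          refine Finset.sum_congr rfl fun y hy => ?_
          have hqy : q.1 y ≠ 0 := ((Finset.mem_filter.mp hy).2).ne'
          field_simp
      _ = ∑ y ∈ s, c y := by
          rw [ENNReal.ofReal_sum_of_nonneg fun y _ => ENNReal.toReal_nonneg]
          exact Finset.sum_congr rfl fun y hy => ENNReal.ofReal_toReal (hfin y hy)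
      _ ≤ ∑ y, c y := Finset.sum_le_sum_of_subset (Finset.subset_univ s)
  · -- attainment direction
    rcases eq_or_ne (∑ y, c y) 0 with hS | hS0
    · rw [hS]; exact bot_le
    rcases eq_or_ne (∑ y, c y) ⊤ with hST | hST
    · obtain ⟨y0, -, hy0⟩ := ENNReal.sum_eq_top.mp hST
      set q : Simplex Y := ⟨fun y => if y = y0 then 1 else 0,
        fun y => by dsimp only; split <;> norm_num, by simp⟩ with hq
      refine le_trans ?_ (le_iSup _ q)
      have : ∏ y, ((ENNReal.ofReal (q.1 y))⁻¹ * c y) ^ (q.1 y) = ⊤ := by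
        rw [Finset.prod_eq_single y0 (fun b _ hb => ?_) (fun h => absurd (Finset.mem_univ y0) h)]
        · rw [show q.1 y0 = 1 from if_pos rfl, ENNReal.ofReal_one, inv_one, one_mul,
            ENNReal.rpow_one, hy0]
        · rw [show q.1 b = 0 from if_neg hb, ENNReal.rpow_zero]
      rw [this, hST]
    refine le_trans ?_ (le_iSup _ (gibbs c hS0 hST))
    have key : ∀ y, ((ENNReal.ofReal ((gibbs c hS0 hST).1 y))⁻¹ * c y) ^ ((gibbs c hS0 hST).1 y)
        = (∑ y, c y) ^ ((gibbs c hS0 hST).1 y) := by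
      intro y
      rcases eq_or_ne (c y) 0 with hc0 | hc0
      · have : (gibbs c hS0 hST).1 y = 0 := by
          show (c y).toReal / (∑ y, c y).toReal = 0
          rw [hc0]; simp
        rw [this, ENNReal.rpow_zero, ENNReal.rpow_zero]
      · have hcT : c y ≠ ⊤ := fun h => hST (ENNReal.sum_eq_top.mpr ⟨y, Finset.mem_univ y, h⟩)
        rw [show (gibbs c hS0 hST).1 y = (c y).toReal / (∑ y, c y).toReal from rfl,
          gibbs_key hS0 hST hc0 hcT]
    rw [Finset.prod_congr rfl fun y _ => key y,
      prod_rpow_weight _ _ (gibbs c hS0 hST).2.1 (gibbs c hS0 hST).2.2]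
end RoundMax



section Game
open ENNReal
variable {X Y : Type*} [Fintype Y] [Inhabited Y]

lemma exp_cumLoss (f : Expert X Y) (xs : List X) (ys : List Y) :
    EReal.exp (cumLoss f xs ys) = (ENNReal.ofReal (likelihood f xs ys))⁻¹ := by
  unfold cumLoss likelihood logloss
  rw [exp_sum]
  rw [Finset.prod_congr rfl fun t _ => exp_negLog
    ((f (xs.take (t + 1)) (ys.take t)).1 (ys.getD t default))]
  rw [← ENNReal.prod_inv_distrib (fun i _ j _ _ => Or.inr ENNReal.ofReal_ne_top)]
  rw [ENNReal.ofReal_prod_of_nonneg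
    (fun t _ => (f (xs.take (t + 1)) (ys.take t)).2.1 (ys.getD t default))]

lemma exp_neg_iInf_cumLoss (F : Set (Expert X Y)) (xs : List X) (ys : List Y) :
    EReal.exp (-(⨅ f : F, cumLoss (f : Expert X Y) xs ys))
      = ⨆ f : F, ENNReal.ofReal (likelihood (f : Expert X Y) xs ys) := by
  rw [EReal.exp_neg, exp_iInf]
  rw [iInf_congr fun f : F => exp_cumLoss (f : Expert X Y) xs ys]
  rw [ENNReal.inv_iInf]
  exact iSup_congr fun f => inv_inv _

/-- The multiplicative (Shtarkov-sum) value of the game. -/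
noncomputable def Phi (F : Set (Expert X Y)) : ℕ → List X → List Y → ℝ≥0∞
  | 0, xs, ys => ⨆ f : F, ENNReal.ofReal (likelihood (f : Expert X Y) xs ys)
  | r + 1, xs, ys => ⨆ x : X, ∑ y : Y, Phi F r (xs ++ [x]) (ys ++ [y])

lemma exp_valToGo [Nonempty X] (F : Set (Expert X Y)) :
    ∀ (r : ℕ) (xs : List X) (ys : List Y) (acc : EReal),
      EReal.exp (valToGo F r xs ys acc) = EReal.exp acc * Phi F r xs ys := by
  intro r
  induction r with
  | zero =>
    intro xs ys acc
    rw [show valToGo F 0 xs ys acc = acc - ⨅ f : F, cumLoss (f : Expert X Y) xs ys from rfl]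
    rw [sub_eq_add_neg, EReal.exp_add, exp_neg_iInf_cumLoss]
    rfl
  | succ r ih =>
    intro xs ys acc
    rw [show valToGo F (r + 1) xs ys acc = ⨆ x : X, ⨅ p : Simplex Y, ⨆ y : Y,
      valToGo F r (xs ++ [x]) (ys ++ [y]) (acc + logloss p y) from rfl]
    rw [exp_iSup]
    have hx : ∀ x : X,
        EReal.exp (⨅ p : Simplex Y, ⨆ y : Y, valToGo F r (xs ++ [x]) (ys ++ [y])
          (acc + logloss p y))
        = EReal.exp acc * ∑ y : Y, Phi F r (xs ++ [x]) (ys ++ [y]) := by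
      intro x
      rw [exp_iInf]
      have hp : ∀ p : Simplex Y,
          EReal.exp (⨆ y : Y, valToGo F r (xs ++ [x]) (ys ++ [y]) (acc + logloss p y))
          = ⨆ y : Y, EReal.exp acc
              * ((ENNReal.ofReal (p.1 y))⁻¹ * Phi F r (xs ++ [x]) (ys ++ [y])) := by
        intro p
        rw [exp_iSup]
        refine iSup_congr fun y => ?_
        rw [ih, EReal.exp_add, show logloss p y = negLog (p.1 y) from rfl, exp_negLog, mul_assoc]
      rw [iInf_congr hp]
      exact round_min (EReal.exp acc) _
    rw [iSup_congr hx, ← ENNReal.mul_iSup]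
    rfl

end Game


section Dual
open ENNReal
variable {X Y : Type*} [Fintype Y] [Inhabited Y]

lemma expTree_shift (π : List Y → Simplex Y) (g : List Y → EReal) (pre : List Y) :
    ∀ (r : ℕ) (l : List Y),
      expTree π g r (pre ++ l) = expTree (fun t => π (pre ++ t)) (fun t => g (pre ++ t)) r l := by
  intro r
  induction r with
  | zero => intro l; rfl
  | succ r ih =>
    intro l
    show (∑ y : Y, ((π (pre ++ l)).1 y : EReal) * expTree π g r ((pre ++ l) ++ [y]))
      = ∑ y : Y, ((π (pre ++ l)).1 y : EReal)
          * expTree (fun t => π (pre ++ t)) (fun t => g (pre ++ t)) r (l ++ [y])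
    refine Finset.sum_congr rfl fun y _ => ?_
    rw [List.append_assoc, ih (l ++ [y])]

lemma treePath_cons (χ : List Y → X) (y : Y) (suf : List Y) :
    treePath χ (y :: suf) = χ [] :: treePath (fun l => χ (y :: l)) suf := by
  unfold treePath
  rw [List.length_cons, List.range_succ_eq_map, List.map_cons, List.map_map]
  rfl

lemma exp_expTree_succ (π : List Y → Simplex Y) (g : List Y → EReal) (r : ℕ) (pre : List Y) :
    EReal.exp (expTree π g (r + 1) pre)
      = ∏ y : Y, (EReal.exp (expTree π g r (pre ++ [y]))) ^ ((π pre).1 y) := by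
  rw [show expTree π g (r + 1) pre
      = ∑ y : Y, ((π pre).1 y : EReal) * expTree π g r (pre ++ [y]) from rfl, exp_sum]
  refine Finset.prod_congr rfl fun y _ => ?_
  rw [mul_comm, EReal.exp_mul]

lemma exp_expTree_const_add (π : List Y → Simplex Y) (a : EReal) (g : List Y → EReal) :
    ∀ (r : ℕ) (pre : List Y),
      EReal.exp (expTree π (fun suf => a + g suf) r pre)
        = EReal.exp a * EReal.exp (expTree π g r pre) := by
  intro r
  induction r with
  | zero => intro pre; exact EReal.exp_add a (g pre)
  | succ r ih =>
    intro pre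
    rw [exp_expTree_succ, exp_expTree_succ]
    rw [Finset.prod_congr rfl fun y (_ : y ∈ Finset.univ) => by rw [ih (pre ++ [y])]]
    exact prod_mul_rpow _ _ _ (π pre).2.1 (π pre).2.2

/-- The body of the dual value, for a fixed pair of trees. -/
noncomputable def dualBody (F : Set (Expert X Y)) (r : ℕ) (xs : List X) (ys : List Y)
    (χ : List Y → X) (π : List Y → Simplex Y) : EReal :=
  expTree π (fun suf =>
    (∑ s ∈ Finset.range r, logloss (π (suf.take s)) (suf.getD s default)) -
      ⨅ f : F, cumLoss (f : Expert X Y) (xs ++ treePath χ suf) (ys ++ suf)) r []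

lemma dualValToGo_eq (F : Set (Expert X Y)) (r : ℕ) (xs : List X) (ys : List Y) :
    dualValToGo F r xs ys
      = ⨆ χ : List Y → X, ⨆ π : List Y → Simplex Y, dualBody F r xs ys χ π := rfl

lemma exp_dualBody_succ (F : Set (Expert X Y)) (r : ℕ) (xs : List X) (ys : List Y)
    (χ : List Y → X) (π : List Y → Simplex Y) :
    EReal.exp (dualBody F (r + 1) xs ys χ π)
      = ∏ y : Y, ((ENNReal.ofReal ((π []).1 y))⁻¹
          * EReal.exp (dualBody F r (xs ++ [χ []]) (ys ++ [y])
              (fun l => χ (y :: l)) (fun l => π (y :: l)))) ^ ((π []).1 y) := by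
  rw [dualBody, exp_expTree_succ]
  refine Finset.prod_congr rfl fun y _ => ?_
  congr 1
  rw [List.nil_append]
  have hshift := expTree_shift π (fun suf =>
    (∑ s ∈ Finset.range (r + 1), logloss (π (suf.take s)) (suf.getD s default)) -
      ⨅ f : F, cumLoss (f : Expert X Y) (xs ++ treePath χ suf) (ys ++ suf)) [y] r []
  rw [List.append_nil] at hshift
  rw [hshift]
  have hG : (fun t => (∑ s ∈ Finset.range (r + 1),
        logloss (π (([y] ++ t).take s)) (([y] ++ t).getD s default)) -
      ⨅ f : F, cumLoss (f : Expert X Y) (xs ++ treePath χ ([y] ++ t)) (ys ++ ([y] ++ t)))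
      = fun suf => logloss (π []) y +
        ((∑ s ∈ Finset.range r,
            logloss ((fun l => π (y :: l)) (suf.take s)) (suf.getD s default)) -
          ⨅ f : F, cumLoss (f : Expert X Y)
            ((xs ++ [χ []]) ++ treePath (fun l => χ (y :: l)) suf) ((ys ++ [y]) ++ suf)) := by
    funext suf
    show (∑ s ∈ Finset.range (r + 1),
        logloss (π ((y :: suf).take s)) ((y :: suf).getD s default)) -
      ⨅ f : F, cumLoss (f : Expert X Y) (xs ++ treePath χ (y :: suf)) (ys ++ (y :: suf)) = _
    rw [Finset.sum_range_succ']
    simp only [List.take_succ_cons, List.getD_cons_succ, List.getD_cons_zero, List.take_zero,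
      treePath_cons]
    rw [show xs ++ (χ [] :: treePath (fun l => χ (y :: l)) suf)
        = (xs ++ [χ []]) ++ treePath (fun l => χ (y :: l)) suf by
      rw [List.append_assoc, List.singleton_append]]
    rw [show ys ++ (y :: suf) = (ys ++ [y]) ++ suf by
      rw [List.append_assoc, List.singleton_append]]
    rw [sub_eq_add_neg, add_comm _ (logloss (π []) y), add_assoc, ← sub_eq_add_neg]
  rw [hG, exp_expTree_const_add]
  rw [show logloss (π []) y = negLog ((π []).1 y) from rfl, exp_negLog]
  rfl

lemma iSup_tree_split {α β : Type*} [Nonempty α] [Nonempty β]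
    (H : α → β → (Y → List Y → α) → (Y → List Y → β) → ℝ≥0∞) :
    (⨆ χ : List Y → α, ⨆ π : List Y → β,
        H (χ []) (π []) (fun y l => χ (y :: l)) (fun y l => π (y :: l)))
      = ⨆ x : α, ⨆ q : β, ⨆ gχ : Y → List Y → α, ⨆ gπ : Y → List Y → β, H x q gχ gπ := by
  refine le_antisymm (iSup_le fun χ => iSup_le fun π => ?_) ?_
  · exact le_iSup_of_le (χ []) (le_iSup_of_le (π []) (le_iSup_of_le (fun y l => χ (y :: l))
      (le_iSup_of_le (fun y l => π (y :: l)) le_rfl)))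
  · refine iSup_le fun x => iSup_le fun q => iSup_le fun gχ => iSup_le fun gπ => ?_
    exact le_iSup_of_le (fun l => match l with | [] => x | y :: t => gχ y t)
      (le_iSup_of_le (fun l => match l with | [] => q | y :: t => gπ y t) le_rfl)

lemma iSup_pair_fun {α β : Type*} [Nonempty α] [Nonempty β] (h : Y → α → β → ℝ≥0∞) :
    (⨆ gχ : Y → α, ⨆ gπ : Y → β, ∏ y : Y, h y (gχ y) (gπ y))
      = ∏ y : Y, ⨆ i : α × β, h y i.1 i.2 := by
  rw [prod_iSup (fun y (i : α × β) => h y i.1 i.2)]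
  refine le_antisymm ?_ ?_
  · exact iSup_le fun gχ => iSup_le fun gπ => le_iSup_of_le (fun y => (gχ y, gπ y)) le_rfl
  · exact iSup_le fun g => le_iSup_of_le (fun y => (g y).1) (le_iSup_of_le (fun y => (g y).2) le_rfl)

lemma exp_dualValToGo [Nonempty X] (F : Set (Expert X Y)) :
    ∀ (r : ℕ) (xs : List X) (ys : List Y),
      EReal.exp (dualValToGo F r xs ys) = Phi F r xs ys := by
  intro r
  induction r with
  | zero =>
    intro xs ys
    rw [dualValToGo_eq]
    have hb : ∀ (χ : List Y → X) (π : List Y → Simplex Y),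
        dualBody F 0 xs ys χ π = -(⨅ f : F, cumLoss (f : Expert X Y) xs ys) := by
      intro χ π
      show (∑ s ∈ Finset.range 0,
          logloss (π (([] : List Y).take s)) (([] : List Y).getD s default))
        - ⨅ f : F, cumLoss (f : Expert X Y) (xs ++ treePath χ []) (ys ++ []) = _
      simp [treePath, sub_eq_add_neg]
    rw [iSup_congr fun χ => iSup_congr fun π => hb χ π, iSup_const, iSup_const,
      exp_neg_iInf_cumLoss]
    rfl
  | succ r ih =>
    intro xs ys
    rw [dualValToGo_eq, exp_iSup]
    rw [iSup_congr fun χ : List Y → X => exp_iSup fun π : List Y → Simplex Y =>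
      dualBody F (r + 1) xs ys χ π]
    rw [iSup_congr fun χ : List Y → X => iSup_congr fun π : List Y → Simplex Y =>
      exp_dualBody_succ F r xs ys χ π]
    calc (⨆ χ : List Y → X, ⨆ π : List Y → Simplex Y, ∏ y : Y,
            ((ENNReal.ofReal ((π []).1 y))⁻¹
              * EReal.exp (dualBody F r (xs ++ [χ []]) (ys ++ [y])
                  (fun l => χ (y :: l)) (fun l => π (y :: l)))) ^ ((π []).1 y))
        = ⨆ x : X, ⨆ q : Simplex Y, ⨆ gχ : Y → List Y → X, ⨆ gπ : Y → List Y → Simplex Y,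
            ∏ y : Y, ((ENNReal.ofReal (q.1 y))⁻¹
              * EReal.exp (dualBody F r (xs ++ [x]) (ys ++ [y]) (gχ y) (gπ y))) ^ (q.1 y) :=
          iSup_tree_split (fun x q gχ gπ => ∏ y : Y, ((ENNReal.ofReal (q.1 y))⁻¹
            * EReal.exp (dualBody F r (xs ++ [x]) (ys ++ [y]) (gχ y) (gπ y))) ^ (q.1 y))
      _ = ⨆ x : X, ⨆ q : Simplex Y, ∏ y : Y,
            ((ENNReal.ofReal (q.1 y))⁻¹ * Phi F r (xs ++ [x]) (ys ++ [y])) ^ (q.1 y) := by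
          refine iSup_congr fun x => iSup_congr fun q => ?_
          rw [iSup_pair_fun (fun y a b => ((ENNReal.ofReal (q.1 y))⁻¹
            * EReal.exp (dualBody F r (xs ++ [x]) (ys ++ [y]) a b)) ^ (q.1 y))]
          refine Finset.prod_congr rfl fun y _ => ?_
          rw [← iSup_rpow _ (q.2.1 y), ← ENNReal.mul_iSup]
          congr 2
          rw [show (⨆ i : (List Y → X) × (List Y → Simplex Y),
              EReal.exp (dualBody F r (xs ++ [x]) (ys ++ [y]) i.1 i.2))
            = ⨆ a : List Y → X, ⨆ b : List Y → Simplex Y,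
              EReal.exp (dualBody F r (xs ++ [x]) (ys ++ [y]) a b) from iSup_prod]
          rw [← iSup_congr fun a : List Y → X => exp_iSup fun b : List Y → Simplex Y =>
            dualBody F r (xs ++ [x]) (ys ++ [y]) a b]
          rw [← exp_iSup, ← dualValToGo_eq, ih]
      _ = ⨆ x : X, ∑ y : Y, Phi F r (xs ++ [x]) (ys ++ [y]) :=
          iSup_congr fun x => round_max (fun y => Phi F r (xs ++ [x]) (ys ++ [y]))
      _ = Phi F (r + 1) xs ys := rfl

end Dual

/-- If for every `x_{1:T} ∈ X^T` and `y_{1:T} ∈ Y^T` the best expert's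
cumulative log loss is finite, i.e. `inf_{f ∈ F} Σ_{t=1}^T ℓ(f(x_{1:t}, y_{1:t-1}), y_t) < ∞`,
then the minimax regret equals the dual value: `R_T(F) = V_T(F)`. -/
theorem minimaxRegret_eq_dualValue
    {X Y : Type*} [Fintype Y] [Inhabited Y] [Nonempty X]
    (F : Set (Expert X Y)) (hF : F.Nonempty) (T : ℕ) (hT : 1 ≤ T)
    (h : ∀ (xs : List X) (ys : List Y), xs.length = T → ys.length = T →
      (⨅ f : F, cumLoss (f : Expert X Y) xs ys) < ⊤) :
    minimaxRegret F T = dualValue F T := by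
  have h1 : EReal.exp (minimaxRegret F T) = EReal.exp (dualValue F T) := by
    rw [show minimaxRegret F T = valToGo F T [] [] 0 from rfl,
      show dualValue F T = dualValToGo F T [] [] from rfl,
      exp_valToGo F T [] [] 0, exp_dualValToGo F T [] [], EReal.exp_zero, one_mul]
  have h2 := congrArg ENNReal.log h1
  rwa [EReal.log_exp, EReal.log_exp] at h2
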